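/- For a C¹ function U : [0,π] → ℂ with U(0) = 0 and any integer m with |m| ≥ 1, one has ‖U‖_{L^∞(0,π)}² ≤ (1/(π|m|)) · 2π ∫_0^π ( |U'(θ)|² + (m²/sin²θ)|U(θ)|² ) sin θ dθ. -/

import Mathlib

open Real MeasureTheory

/-- Lemma `L:Linf` of the paper: for a `C¹` function `U : [0,π] → ℂ` with `U(0) = 0`
and an integer `m` with `|m| ≥ 1`,
`‖U‖²_{L^∞(0,π)} ≤ (1/(π|m|)) · 2π ∫₀^π (|U'(θ)|² + (m²/sin²θ)|U(θ)|²) sin θ dθ`.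
Here the `L^∞` bound is stated pointwise (equivalent for continuous `U`), and the
right-hand side, which equals `(1/(π|m|)) ‖∇u‖²_{L²(S²)}` for `u = U(θ)e^{imφ}`, is
written as a Lebesgue (`ENNReal`) integral so that it is defined even when infinite. -/
theorem stmt_2 (U U' : ℝ → ℂ)
    (hU : ∀ θ ∈ Set.Icc (0 : ℝ) π, HasDerivAt U (U' θ) θ)
    (hU' : ContinuousOn U' (Set.Icc (0 : ℝ) π))
    (hU0 : U 0 = 0) (m : ℤ) (hm : 1 ≤ |m|) :
    ∀ θ ∈ Set.Icc (0 : ℝ) π,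
      ENNReal.ofReal (‖U θ‖ ^ 2) ≤
        ENNReal.ofReal (1 / (π * |(m : ℝ)|)) *
          (ENNReal.ofReal (2 * π) *
            ∫⁻ θ in Set.Ioo (0 : ℝ) π,
              ENNReal.ofReal
                ((‖U' θ‖ ^ 2 + ((m : ℝ) ^ 2 / (Real.sin θ) ^ 2) * ‖U θ‖ ^ 2) *
                  Real.sin θ)) := by
  intro θ hθ
  obtain ⟨hθ0, hθπ⟩ := hθ
  set M : ℝ := |(m : ℝ)| with hM
  have hM1 : (1 : ℝ) ≤ M := by
    have : ((1 : ℤ) : ℝ) ≤ (|m| : ℝ) := by exact_mod_cast hm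
    simpa [hM] using this
  have hMpos : 0 < M := lt_of_lt_of_le one_pos hM1
  -- the derivative of ‖U‖²
  set g : ℝ → ℝ := fun t => 2 * ((U' t) * (starRingEnd ℂ) (U t)).re with hg
  have hUc : ContinuousOn U (Set.Icc 0 π) := fun x hx =>
    (hU x hx).continuousAt.continuousWithinAt
  have hgc : ContinuousOn g (Set.Icc 0 π) := by
    apply ContinuousOn.mul continuousOn_const
    exact Complex.continuous_re.comp_continuousOn
      (hU'.mul ((Complex.continuous_conj.comp_continuousOn hUc)))
  have hderiv : ∀ t ∈ Set.uIcc (0 : ℝ) θ, HasDerivAt (fun s => ‖U s‖ ^ 2) (g t) t := by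
    intro t ht
    rw [Set.uIcc_of_le hθ0] at ht
    have ht' : t ∈ Set.Icc (0 : ℝ) π := ⟨ht.1, ht.2.trans hθπ⟩
    have h := hU t ht'
    have h1 : HasDerivAt (fun s => (U s).re) ((U' t).re) t :=
      (Complex.reCLM.hasFDerivAt.comp_hasDerivAt t h)
    have h2 : HasDerivAt (fun s => (U s).im) ((U' t).im) t :=
      (Complex.imCLM.hasFDerivAt.comp_hasDerivAt t h)
    have h3 := ((h1.mul h1).add (h2.mul h2))
    have heq : (fun s => ‖U s‖ ^ 2) = fun s => (U s).re * (U s).re + (U s).im * (U s).im := by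
      funext s
      rw [← Complex.normSq_eq_norm_sq, Complex.normSq_apply]
    rw [heq]
    refine h3.congr_deriv ?_
    simp [hg, Complex.mul_re, Complex.conj_re, Complex.conj_im]
    ring
  have hgint : IntervalIntegrable g volume 0 θ := by
    apply ContinuousOn.intervalIntegrable
    rw [Set.uIcc_of_le hθ0]
    exact hgc.mono (Set.Icc_subset_Icc_right hθπ)
  have hftc : ‖U θ‖ ^ 2 = ∫ t in (0:ℝ)..θ, g t := by
    have := intervalIntegral.integral_eq_sub_of_hasDerivAt hderiv hgint
    rw [this, hU0]
    simp
  -- set f to be the integrand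
  set f : ℝ → ℝ := fun t =>
    (‖U' t‖ ^ 2 + ((m : ℝ) ^ 2 / (Real.sin t) ^ 2) * ‖U t‖ ^ 2) * Real.sin t with hf
  -- pointwise bound
  have hpt : ∀ t ∈ Set.Ioo (0:ℝ) θ, |g t| ≤ (1 / M) * f t := by
    intro t ht
    have hsin : 0 < Real.sin t :=
      Real.sin_pos_of_pos_of_lt_pi ht.1 (lt_of_lt_of_le ht.2 hθπ)
    have habs : |g t| ≤ 2 * (‖U' t‖ * ‖U t‖) := by
      rw [hg, abs_mul]
      have h1 : |((U' t) * (starRingEnd ℂ) (U t)).re| ≤ ‖(U' t) * (starRingEnd ℂ) (U t)‖ :=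
        Complex.abs_re_le_norm _
      rw [norm_mul, RCLike.norm_conj] at h1
      simp only [abs_two]
      nlinarith
    have hm2 : (m : ℝ) ^ 2 = M ^ 2 := by rw [hM]; rw [sq_abs]
    have key : 2 * (‖U' t‖ * ‖U t‖) ≤ (1 / M) * f t := by
      rw [hf, hm2]
      have h1 : 0 ≤ ‖U' t‖ := norm_nonneg _
      have h2 : 0 ≤ ‖U t‖ := norm_nonneg _
      have e : (1 / M) * ((‖U' t‖ ^ 2 + (M ^ 2 / Real.sin t ^ 2) * ‖U t‖ ^ 2) * Real.sin t)
          = (Real.sin t / M) * ‖U' t‖ ^ 2 + (M / Real.sin t) * ‖U t‖ ^ 2 := by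
        field_simp
      rw [e]
      have hamgm : 2 * (‖U' t‖ * ‖U t‖) * (M * Real.sin t)
          ≤ (Real.sin t * ‖U' t‖) ^ 2 + (M * ‖U t‖) ^ 2 := by
        nlinarith [sq_nonneg (Real.sin t * ‖U' t‖ - M * ‖U t‖)]
      rw [div_mul_eq_mul_div, div_mul_eq_mul_div, ← sub_nonneg]
      have : (Real.sin t * ‖U' t‖ ^ 2 / M + M * ‖U t‖ ^ 2 / Real.sin t)
            - 2 * (‖U' t‖ * ‖U t‖)
          = ((Real.sin t * ‖U' t‖) ^ 2 + (M * ‖U t‖) ^ 2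
              - 2 * (‖U' t‖ * ‖U t‖) * (M * Real.sin t)) / (M * Real.sin t) := by
        field_simp
      rw [this]
      apply div_nonneg
      · linarith [hamgm]
      · positivity
    exact habs.trans key
  -- pass to the Lebesgue integral
  have hgint2 : IntegrableOn (fun t => |g t|) (Set.Ioc 0 θ) := by
    rw [← intervalIntegrable_iff_integrableOn_Ioc_of_le hθ0]
    exact hgint.abs
  have step1 : ENNReal.ofReal (‖U θ‖ ^ 2)
      ≤ ∫⁻ t in Set.Ioo (0:ℝ) θ, ENNReal.ofReal (|g t|) := by
    rw [hftc]
    have h1 : (∫ t in (0:ℝ)..θ, g t) ≤ ∫ t in (0:ℝ)..θ, |g t| := by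
      apply intervalIntegral.integral_mono_on hθ0 hgint hgint.abs
      intro x _
      exact le_abs_self _
    have h2 : (∫ t in (0:ℝ)..θ, |g t|) = ∫ t in Set.Ioc 0 θ, |g t| :=
      intervalIntegral.integral_of_le hθ0
    have h3 : ENNReal.ofReal (∫ t in Set.Ioc 0 θ, |g t|)
        = ∫⁻ t in Set.Ioc (0:ℝ) θ, ENNReal.ofReal (|g t|) :=
      MeasureTheory.ofReal_integral_eq_lintegral_ofReal hgint2
        (Filter.Eventually.of_forall fun x => abs_nonneg _)
    have h4 : (volume.restrict (Set.Ioo (0:ℝ) θ)) = volume.restrict (Set.Ioc (0:ℝ) θ) :=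
      Measure.restrict_congr_set MeasureTheory.Ioo_ae_eq_Ioc
    calc ENNReal.ofReal (∫ t in (0:ℝ)..θ, g t)
        ≤ ENNReal.ofReal (∫ t in Set.Ioc 0 θ, |g t|) := by
          apply ENNReal.ofReal_le_ofReal; rw [← h2]; exact h1
      _ = ∫⁻ t in Set.Ioc (0:ℝ) θ, ENNReal.ofReal (|g t|) := h3
      _ = ∫⁻ t in Set.Ioo (0:ℝ) θ, ENNReal.ofReal (|g t|) := by rw [h4]
  have step2 : (∫⁻ t in Set.Ioo (0:ℝ) θ, ENNReal.ofReal (|g t|))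
      ≤ ∫⁻ t in Set.Ioo (0:ℝ) θ, ENNReal.ofReal ((1 / M) * f t) := by
    apply lintegral_mono_ae
    rw [ae_restrict_iff' measurableSet_Ioo]
    exact Filter.Eventually.of_forall fun x hx => ENNReal.ofReal_le_ofReal (hpt x hx)
  have step3 : (∫⁻ t in Set.Ioo (0:ℝ) θ, ENNReal.ofReal ((1 / M) * f t))
      = ENNReal.ofReal (1 / M) * ∫⁻ t in Set.Ioo (0:ℝ) θ, ENNReal.ofReal (f t) := by
    rw [← lintegral_const_mul' _ _ ENNReal.ofReal_ne_top]
    congr 1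
    funext t
    rw [ENNReal.ofReal_mul (by positivity)]
  have step4 : (∫⁻ t in Set.Ioo (0:ℝ) θ, ENNReal.ofReal (f t))
      ≤ ∫⁻ t in Set.Ioo (0:ℝ) π, ENNReal.ofReal (f t) :=
    lintegral_mono_set (Set.Ioo_subset_Ioo_right hθπ)
  have hconst : ENNReal.ofReal (1 / M)
      ≤ ENNReal.ofReal (1 / (π * M)) * ENNReal.ofReal (2 * π) := by
    rw [← ENNReal.ofReal_mul (by positivity)]
    apply ENNReal.ofReal_le_ofReal
    rw [div_mul_eq_mul_div, one_mul]
    rw [div_le_div_iff₀ hMpos (by positivity)]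
    have : 2 * π * M = 2 * M * π := by ring
    nlinarith [Real.pi_pos, hMpos]
  calc ENNReal.ofReal (‖U θ‖ ^ 2)
      ≤ ∫⁻ t in Set.Ioo (0:ℝ) θ, ENNReal.ofReal (|g t|) := step1
    _ ≤ ∫⁻ t in Set.Ioo (0:ℝ) θ, ENNReal.ofReal ((1 / M) * f t) := step2
    _ = ENNReal.ofReal (1 / M) * ∫⁻ t in Set.Ioo (0:ℝ) θ, ENNReal.ofReal (f t) := step3
    _ ≤ ENNReal.ofReal (1 / M) * ∫⁻ t in Set.Ioo (0:ℝ) π, ENNReal.ofReal (f t) :=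
        mul_le_mul_right step4 _
    _ ≤ (ENNReal.ofReal (1 / (π * M)) * ENNReal.ofReal (2 * π)) *
          ∫⁻ t in Set.Ioo (0:ℝ) π, ENNReal.ofReal (f t) := mul_le_mul_left hconst _
    _ = ENNReal.ofReal (1 / (π * M)) * (ENNReal.ofReal (2 * π) *
          ∫⁻ t in Set.Ioo (0:ℝ) π, ENNReal.ofReal (f t)) := by rw [mul_assoc]
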